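/- Let s and t be bijections of ℕ preserving each set {1,...,2^i}, and let G_s(i), G_t(i) be the induced subgraphs of G_s, G_t on the interval [−2^{i+1}, 2^{i+1}]. Then G_s(i) and G_t(i) are isomorphic if and only if the restrictions of s and t to {1,...,2^i} either coincide or are mutually inverse permutations. -/

import Mathlib

/-- The graph `G_s` on `ℤ`: the doubly infinite path together with a chord from
`2n` to `-2s(n)` for every `n ≥ 1`. -/
def Gs (s : ℕ → ℕ) : SimpleGraph ℤ :=
  SimpleGraph.fromRel (fun m m' =>
    m' = m + 1 ∨ ∃ n : ℕ, 1 ≤ n ∧ m = 2 * (n : ℤ) ∧ m' = -(2 * (s n : ℤ)))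

/-- `s` is a bijection of `ℕ` mapping `{1,…,2^i}` onto itself for every `i`. -/
def SegPreserving (s : ℕ → ℕ) : Prop :=
  Function.Bijective s ∧
    ∀ i : ℕ, 1 ≤ i → s '' {n | 1 ≤ n ∧ n ≤ 2 ^ i} = {n | 1 ≤ n ∧ n ≤ 2 ^ i}

/-- `G_s(i)`: the induced subgraph of `G_s` on the interval `[-2^(i+1), 2^(i+1)]`. -/
def Gsi (s : ℕ → ℕ) (i : ℕ) : SimpleGraph {m : ℤ | -(2 ^ (i + 1)) ≤ m ∧ m ≤ 2 ^ (i + 1)} :=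
  SimpleGraph.induce {m : ℤ | -(2 ^ (i + 1)) ≤ m ∧ m ≤ 2 ^ (i + 1)} (Gs s)

namespace Aux

variable {s t : ℕ → ℕ} {i : ℕ}

lemma mem_iff (i : ℕ) (m : ℤ) :
    m ∈ {m : ℤ | -(2 ^ (i + 1)) ≤ m ∧ m ≤ 2 ^ (i + 1)} ↔
      -(2 ^ (i + 1)) ≤ m ∧ m ≤ 2 ^ (i + 1) := Iff.rfl

lemma adjiff (s : ℕ → ℕ) (i : ℕ) {a b : ℤ}
    (ha : a ∈ {m : ℤ | -(2 ^ (i + 1)) ≤ m ∧ m ≤ 2 ^ (i + 1)})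
    (hb : b ∈ {m : ℤ | -(2 ^ (i + 1)) ≤ m ∧ m ≤ 2 ^ (i + 1)}) :
    (Gsi s i).Adj ⟨a, ha⟩ ⟨b, hb⟩ ↔
      ((b = a + 1 ∨ a = b + 1) ∨
        ∃ n : ℕ, 1 ≤ n ∧ 2 * (n : ℤ) ≤ 2 ^ (i + 1) ∧ 2 * ((s n : ℕ) : ℤ) ≤ 2 ^ (i + 1) ∧
          ((a = 2 * (n : ℤ) ∧ b = -(2 * ((s n : ℕ) : ℤ))) ∨
           (b = 2 * (n : ℤ) ∧ a = -(2 * ((s n : ℕ) : ℤ))))) := by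
  rw [mem_iff] at ha hb
  show (Gs s).Adj a b ↔ _
  rw [Gs, SimpleGraph.fromRel_adj]
  constructor
  · rintro ⟨hne, (h | ⟨n, hn1, hn2, hn3⟩) | (h | ⟨n, hn1, hn2, hn3⟩)⟩
    · exact Or.inl (Or.inl h)
    · refine Or.inr ⟨n, hn1, ?_, ?_, Or.inl ⟨hn2, hn3⟩⟩ <;> omega
    · exact Or.inl (Or.inr h)
    · refine Or.inr ⟨n, hn1, ?_, ?_, Or.inr ⟨hn2, hn3⟩⟩ <;> omega
  · rintro ((h | h) | ⟨n, hn1, hb1, hb2, (⟨h1, h2⟩ | ⟨h1, h2⟩)⟩)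
    · exact ⟨by omega, Or.inl (Or.inl h)⟩
    · exact ⟨by omega, Or.inr (Or.inl h)⟩
    · refine ⟨?_, Or.inl (Or.inr ⟨n, hn1, h1, h2⟩)⟩
      have : (1 : ℤ) ≤ (n : ℤ) := by exact_mod_cast hn1
      have : (0 : ℤ) ≤ ((s n : ℕ) : ℤ) := Int.natCast_nonneg _
      omega
    · refine ⟨?_, Or.inr (Or.inr ⟨n, hn1, h1, h2⟩)⟩
      have : (1 : ℤ) ≤ (n : ℤ) := by exact_mod_cast hn1
      have : (0 : ℤ) ≤ ((s n : ℕ) : ℤ) := Int.natCast_nonneg _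
      omega

lemma hNM (i : ℕ) : (2 : ℤ) ^ (i + 1) = 2 * ((2 ^ i : ℕ) : ℤ) := by push_cast; ring

lemma hM1 (i : ℕ) : (1 : ℤ) ≤ ((2 ^ i : ℕ) : ℤ) := by
  have := Nat.one_le_two_pow (n := i); exact_mod_cast this

lemma hM2 {i : ℕ} (hi : 1 ≤ i) : (2 : ℤ) ≤ ((2 ^ i : ℕ) : ℤ) := by
  have : 2 ^ 1 ≤ 2 ^ i := Nat.pow_le_pow_right (by norm_num) hi
  exact_mod_cast this

lemma s_pos {s : ℕ → ℕ} (hs : SegPreserving s) (n : ℕ) (hn : 1 ≤ n) : 1 ≤ s n := by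
  have h := hs.2 n hn
  have : s n ∈ s '' {m | 1 ≤ m ∧ m ≤ 2 ^ n} :=
    Set.mem_image_of_mem _ ⟨hn, (Nat.lt_two_pow_self (n := n)).le⟩
  rw [h] at this; exact this.1

lemma seg_mem {s : ℕ → ℕ} {i : ℕ} (hs : SegPreserving s) (hi : 1 ≤ i) (n : ℕ)
    (h1 : 1 ≤ n) (h2 : n ≤ 2 ^ i) : 1 ≤ s n ∧ s n ≤ 2 ^ i := by
  have h := hs.2 i hi
  have : s n ∈ s '' {m | 1 ≤ m ∧ m ≤ 2 ^ i} := Set.mem_image_of_mem _ ⟨h1, h2⟩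
  rw [h] at this; exact this

lemma seg_surj {s : ℕ → ℕ} {i : ℕ} (hs : SegPreserving s) (hi : 1 ≤ i) (m : ℕ)
    (h1 : 1 ≤ m) (h2 : m ≤ 2 ^ i) : ∃ n, 1 ≤ n ∧ n ≤ 2 ^ i ∧ s n = m := by
  have h := hs.2 i hi
  have : m ∈ s '' {m | 1 ≤ m ∧ m ≤ 2 ^ i} := by rw [h]; exact ⟨h1, h2⟩
  obtain ⟨n, hn, rfl⟩ := this
  exact ⟨n, hn.1, hn.2, rfl⟩

lemma path_adj {a b : ℤ} (ha : a ∈ {m : ℤ | -(2 ^ (i+1)) ≤ m ∧ m ≤ 2 ^ (i+1)})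
    (hb : b ∈ {m : ℤ | -(2 ^ (i+1)) ≤ m ∧ m ≤ 2 ^ (i+1)}) (h : b = a + 1 ∨ a = b + 1) :
    (Gsi s i).Adj ⟨a, ha⟩ ⟨b, hb⟩ := by
  rcases h with h | h
  · exact (adjiff s i ha hb).2 (Or.inl (Or.inl h))
  · exact (adjiff s i ha hb).2 (Or.inl (Or.inr h))

lemma chord_adj {a b : ℤ} (ha : a ∈ {m : ℤ | -(2 ^ (i+1)) ≤ m ∧ m ≤ 2 ^ (i+1)})
    (hb : b ∈ {m : ℤ | -(2 ^ (i+1)) ≤ m ∧ m ≤ 2 ^ (i+1)}) (n : ℕ) (hn : 1 ≤ n)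
    (h1 : a = 2 * (n : ℤ)) (h2 : b = -(2 * ((s n : ℕ) : ℤ))) :
    (Gsi s i).Adj ⟨a, ha⟩ ⟨b, hb⟩ := by
  rw [mem_iff] at ha hb
  exact (adjiff s i ha hb).2 (Or.inr ⟨n, hn, by omega, by omega, Or.inl ⟨h1, h2⟩⟩)

lemma nbr1 (hs : SegPreserving s) {a u : ℤ} (ha : a ∈ {m : ℤ | -(2 ^ (i+1)) ≤ m ∧ m ≤ 2 ^ (i+1)})
    (hu : u ∈ {m : ℤ | -(2 ^ (i+1)) ≤ m ∧ m ≤ 2 ^ (i+1)}) (hodd : a % 2 = 1 ∨ a = 0)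
    (h : (Gsi s i).Adj ⟨a, ha⟩ ⟨u, hu⟩) : u = a - 1 ∨ u = a + 1 := by
  rcases (adjiff s i ha hu).1 h with ((h | h) | ⟨n, hn1, _, _, (⟨h1, h2⟩ | ⟨h1, h2⟩)⟩)
  · omega
  · omega
  · have hn : (1 : ℤ) ≤ (n : ℤ) := by exact_mod_cast hn1
    have hsn : (1 : ℤ) ≤ ((s n : ℕ) : ℤ) := by
      have := s_pos hs n hn1; exact_mod_cast this
    omega
  · have hn : (1 : ℤ) ≤ (n : ℤ) := by exact_mod_cast hn1
    have hsn : (1 : ℤ) ≤ ((s n : ℕ) : ℤ) := by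
      have := s_pos hs n hn1; exact_mod_cast this
    omega

lemma nbr2 {a u : ℤ} (ha : a ∈ {m : ℤ | -(2 ^ (i+1)) ≤ m ∧ m ≤ 2 ^ (i+1)})
    (hu : u ∈ {m : ℤ | -(2 ^ (i+1)) ≤ m ∧ m ≤ 2 ^ (i+1)}) (n : ℕ) (hn : 1 ≤ n)
    (han : a = 2 * (n : ℤ)) (h : (Gsi s i).Adj ⟨a, ha⟩ ⟨u, hu⟩) :
    u = a - 1 ∨ u = a + 1 ∨ u = -(2 * ((s n : ℕ) : ℤ)) := by
  rcases (adjiff s i ha hu).1 h with ((h | h) | ⟨n', hn1, _, _, (⟨h1, h2⟩ | ⟨h1, h2⟩)⟩)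
  · omega
  · omega
  · have : (n' : ℤ) = (n : ℤ) := by omega
    have : n' = n := by exact_mod_cast this
    subst this; omega
  · have hn' : (1 : ℤ) ≤ (n' : ℤ) := by exact_mod_cast hn1
    have h0 : (0 : ℤ) ≤ ((s n' : ℕ) : ℤ) := Int.natCast_nonneg _
    have hnz : (1 : ℤ) ≤ (n : ℤ) := by exact_mod_cast hn
    omega

lemma nbr3 {a u : ℤ} (ha : a ∈ {m : ℤ | -(2 ^ (i+1)) ≤ m ∧ m ≤ 2 ^ (i+1)})
    (hu : u ∈ {m : ℤ | -(2 ^ (i+1)) ≤ m ∧ m ≤ 2 ^ (i+1)}) (m : ℕ) (hm : 1 ≤ m)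
    (ham : a = -(2 * (m : ℤ))) (h : (Gsi s i).Adj ⟨a, ha⟩ ⟨u, hu⟩) :
    u = a - 1 ∨ u = a + 1 ∨
      (∃ n : ℕ, 1 ≤ n ∧ 2 * (n : ℤ) ≤ 2 ^ (i + 1) ∧ s n = m ∧ u = 2 * (n : ℤ)) := by
  rcases (adjiff s i ha hu).1 h with ((h | h) | ⟨n', hn1, hb1, _, (⟨h1, h2⟩ | ⟨h1, h2⟩)⟩)
  · omega
  · omega
  · have hn' : (1 : ℤ) ≤ (n' : ℤ) := by exact_mod_cast hn1
    have hmz : (1 : ℤ) ≤ (m : ℤ) := by exact_mod_cast hm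
    omega
  · refine Or.inr (Or.inr ⟨n', hn1, hb1, ?_, h1⟩)
    have : ((s n' : ℕ) : ℤ) = (m : ℤ) := by omega
    exact_mod_cast this

lemma pig {a b c p q : ℤ} (hab : a ≠ b) (hac : a ≠ c) (hbc : b ≠ c)
    (ha : a = p ∨ a = q) (hb : b = p ∨ b = q) (hc : c = p ∨ c = q) : False := by
  rcases ha with rfl | rfl <;> rcases hb with h | h <;> rcases hc with h' | h' <;> omega

def Deg3 {α : Type*} (G : SimpleGraph α) (v : α) : Prop :=
  ∃ x y z, x ≠ y ∧ x ≠ z ∧ y ≠ z ∧ G.Adj v x ∧ G.Adj v y ∧ G.Adj v z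

lemma deg3_map {α β : Type*} {G : SimpleGraph α} {G' : SimpleGraph β} (φ : G ≃g G') (v : α) :
    Deg3 G v → Deg3 G' (φ v) := by
  rintro ⟨x, y, z, hxy, hxz, hyz, h1, h2, h3⟩
  exact ⟨φ x, φ y, φ z, fun h => hxy (φ.toEquiv.injective h),
    fun h => hxz (φ.toEquiv.injective h), fun h => hyz (φ.toEquiv.injective h),
    φ.map_adj_iff.2 h1, φ.map_adj_iff.2 h2, φ.map_adj_iff.2 h3⟩

lemma deg3_iff' {α β : Type*} {G : SimpleGraph α} {G' : SimpleGraph β} (φ : G ≃g G') (v : α) :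
    Deg3 G v ↔ Deg3 G' (φ v) := by
  refine ⟨deg3_map φ v, fun h => ?_⟩
  have := deg3_map φ.symm (φ v) h
  simpa using this

lemma deg3_iff (hs : SegPreserving s) (hi : 1 ≤ i) {a : ℤ}
    (ha : a ∈ {m : ℤ | -(2 ^ (i+1)) ≤ m ∧ m ≤ 2 ^ (i+1)}) :
    Deg3 (Gsi s i) ⟨a, ha⟩ ↔
      (a % 2 = 0 ∧ a ≠ 0 ∧ a ≠ 2 ^ (i + 1) ∧ a ≠ -(2 ^ (i + 1))) := by
  have hA := (mem_iff i a).1 ha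
  have hN := hNM i
  have hM := hM2 hi
  constructor
  · rintro ⟨x, y, z, hxy, hxz, hyz, h1, h2, h3⟩
    have key : ∀ p q : ℤ,
        (∀ u (hu : u ∈ {m : ℤ | -(2 ^ (i+1)) ≤ m ∧ m ≤ 2 ^ (i+1)}),
          (Gsi s i).Adj ⟨a, ha⟩ ⟨u, hu⟩ → u = p ∨ u = q) → False := by
      intro p q hpq
      exact pig (fun h => hxy (Subtype.ext h)) (fun h => hxz (Subtype.ext h))
        (fun h => hyz (Subtype.ext h)) (hpq x.1 x.2 h1) (hpq y.1 y.2 h2) (hpq z.1 z.2 h3)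
    refine ⟨?_, ?_, ?_, ?_⟩
    · by_contra hodd
      have hodd' : a % 2 = 1 := by omega
      exact key (a - 1) (a + 1) (fun u hu h => nbr1 hs ha hu (Or.inl hodd') h)
    · intro h0
      exact key (a - 1) (a + 1) (fun u hu h => nbr1 hs ha hu (Or.inr h0) h)
    · intro hNa
      refine key (a - 1) (-(2 * ((s (2 ^ i) : ℕ) : ℤ))) (fun u hu h => ?_)
      have hu' := (mem_iff i u).1 hu
      rcases nbr2 ha hu (2 ^ i) Nat.one_le_two_pow (by omega) h with h' | h' | h'
      · exact Or.inl h'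
      · omega
      · exact Or.inr h'
    · intro hNa
      obtain ⟨n₀, hn₀1, hn₀2, hn₀3⟩ := seg_surj hs hi (2 ^ i) Nat.one_le_two_pow le_rfl
      refine key (a + 1) (2 * (n₀ : ℤ)) (fun u hu h => ?_)
      have hu' := (mem_iff i u).1 hu
      rcases nbr3 ha hu (2 ^ i) Nat.one_le_two_pow (by omega) h with h' | h' | ⟨n, hn1, hn2, hn3, hn4⟩
      · omega
      · exact Or.inl h'
      · have : n = n₀ := hs.1.1 (by rw [hn3, hn₀3])
        subst this; exact Or.inr hn4
  · rintro ⟨he, h0, hbig, hsmall⟩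
    rcases lt_or_gt_of_ne h0 with hneg | hpos
    · -- a negative even
      set m : ℕ := ((-a) / 2).toNat with hm
      have hmz : (m : ℤ) = (-a) / 2 := Int.toNat_of_nonneg (by omega)
      have ham : a = -(2 * (m : ℤ)) := by omega
      have hm1 : 1 ≤ m := by omega
      have hm2' : m ≤ 2 ^ i := by
        have : (m : ℤ) ≤ ((2 ^ i : ℕ) : ℤ) := by omega
        exact_mod_cast this
      obtain ⟨n, hn1, hn2, hn3⟩ := seg_surj hs hi m hm1 hm2'
      have hnZ : (1 : ℤ) ≤ (n : ℤ) := by exact_mod_cast hn1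
      have hnZ2 : (n : ℤ) ≤ ((2 ^ i : ℕ) : ℤ) := by exact_mod_cast hn2
      have hx : (a - 1) ∈ {m : ℤ | -(2 ^ (i+1)) ≤ m ∧ m ≤ 2 ^ (i+1)} := ⟨by omega, by omega⟩
      have hy : (a + 1) ∈ {m : ℤ | -(2 ^ (i+1)) ≤ m ∧ m ≤ 2 ^ (i+1)} := ⟨by omega, by omega⟩
      have hz : (2 * (n : ℤ)) ∈ {m : ℤ | -(2 ^ (i+1)) ≤ m ∧ m ≤ 2 ^ (i+1)} := ⟨by omega, by omega⟩
      refine ⟨⟨a - 1, hx⟩, ⟨a + 1, hy⟩, ⟨2 * (n : ℤ), hz⟩, ?_, ?_, ?_, ?_, ?_, ?_⟩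
      · intro h; rw [Subtype.mk.injEq] at h; omega
      · intro h; rw [Subtype.mk.injEq] at h; omega
      · intro h; rw [Subtype.mk.injEq] at h; omega
      · exact (path_adj hx ha (by omega)).symm
      · exact path_adj ha hy (by omega)
      · refine ((chord_adj hz ha n hn1 rfl ?_)).symm
        rw [ham, hn3]
    · -- a positive even
      set n : ℕ := (a / 2).toNat with hn
      have hnz : (n : ℤ) = a / 2 := Int.toNat_of_nonneg (by omega)
      have han : a = 2 * (n : ℤ) := by omega
      have hn1 : 1 ≤ n := by omega
      have hn2 : n ≤ 2 ^ i := by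
        have : (n : ℤ) ≤ ((2 ^ i : ℕ) : ℤ) := by omega
        exact_mod_cast this
      have hsn := seg_mem hs hi n hn1 hn2
      have hsnZ : (1 : ℤ) ≤ ((s n : ℕ) : ℤ) := by exact_mod_cast hsn.1
      have hsnZ2 : ((s n : ℕ) : ℤ) ≤ ((2 ^ i : ℕ) : ℤ) := by exact_mod_cast hsn.2
      have hx : (a - 1) ∈ {m : ℤ | -(2 ^ (i+1)) ≤ m ∧ m ≤ 2 ^ (i+1)} := ⟨by omega, by omega⟩
      have hy : (a + 1) ∈ {m : ℤ | -(2 ^ (i+1)) ≤ m ∧ m ≤ 2 ^ (i+1)} := ⟨by omega, by omega⟩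
      have hz : (-(2 * ((s n : ℕ) : ℤ))) ∈ {m : ℤ | -(2 ^ (i+1)) ≤ m ∧ m ≤ 2 ^ (i+1)} :=
        ⟨by omega, by omega⟩
      refine ⟨⟨a - 1, hx⟩, ⟨a + 1, hy⟩, ⟨-(2 * ((s n : ℕ) : ℤ)), hz⟩, ?_, ?_, ?_, ?_, ?_, ?_⟩
      · intro h; rw [Subtype.mk.injEq] at h; omega
      · intro h; rw [Subtype.mk.injEq] at h; omega
      · intro h; rw [Subtype.mk.injEq] at h; omega
      · exact (path_adj hx ha (by omega)).symm
      · exact path_adj ha hy (by omega)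
      · exact chord_adj ha hz n hn1 han rfl

def Cent {α : Type*} (G : SimpleGraph α) (v : α) : Prop :=
  ¬Deg3 G v ∧ (∀ u, G.Adj v u → ¬Deg3 G u) ∧
    (∀ u w, G.Adj v u → G.Adj u w → w ≠ v → Deg3 G w)

lemma cent_map {α β : Type*} {G : SimpleGraph α} {G' : SimpleGraph β} (φ : G ≃g G') (v : α)
    (h : Cent G v) : Cent G' (φ v) := by
  obtain ⟨h1, h2, h3⟩ := h
  refine ⟨fun hd => h1 ((deg3_iff' φ v).2 hd), ?_, ?_⟩
  · intro u hu
    have hadj : G.Adj v (φ.symm u) := by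
      have : G'.Adj (φ v) (φ (φ.symm u)) := by simpa using hu
      exact φ.map_adj_iff.1 this
    have := h2 _ hadj
    rw [deg3_iff' φ (φ.symm u)] at this
    simpa using this
  · intro u w hu hw hne
    have hadj : G.Adj v (φ.symm u) := by
      have : G'.Adj (φ v) (φ (φ.symm u)) := by simpa using hu
      exact φ.map_adj_iff.1 this
    have hadj2 : G.Adj (φ.symm u) (φ.symm w) := by
      have : G'.Adj (φ (φ.symm u)) (φ (φ.symm w)) := by simpa using hw
      exact φ.map_adj_iff.1 this
    have hne2 : φ.symm w ≠ v := by
      intro h; apply hne; rw [← h]; simp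
    have := h3 _ _ hadj hadj2 hne2
    rw [deg3_iff' φ (φ.symm w)] at this
    simpa using this

lemma cent_zero (hs : SegPreserving s) (hi : 1 ≤ i)
    (h0 : (0 : ℤ) ∈ {m : ℤ | -(2 ^ (i+1)) ≤ m ∧ m ≤ 2 ^ (i+1)}) :
    Cent (Gsi s i) ⟨0, h0⟩ := by
  have hN := hNM i
  have hM := hM2 hi
  refine ⟨?_, ?_, ?_⟩
  · intro hd
    exact ((deg3_iff hs hi h0).1 hd).2.1 rfl
  · rintro ⟨u, hu⟩ hadj hd
    have hval := nbr1 hs h0 hu (Or.inr rfl) hadj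
    have := ((deg3_iff hs hi hu).1 hd).1
    omega
  · rintro ⟨u, hu⟩ ⟨w, hw⟩ hadj1 hadj2 hne
    have hu1 := nbr1 hs h0 hu (Or.inr rfl) hadj1
    have hw1 := nbr1 hs hu hw (Or.inl (by omega)) hadj2
    have hwne : w ≠ 0 := fun h => hne (Subtype.ext h)
    rw [deg3_iff hs hi hw]
    refine ⟨by omega, hwne, by omega, by omega⟩

lemma cent_only_zero (ht : SegPreserving t) (hi : 1 ≤ i) {a : ℤ}
    (ha : a ∈ {m : ℤ | -(2 ^ (i+1)) ≤ m ∧ m ≤ 2 ^ (i+1)})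
    (hc : Cent (Gsi t i) ⟨a, ha⟩) : a = 0 := by
  have hN := hNM i
  have hM := hM2 hi
  have hA := (mem_iff i a).1 ha
  obtain ⟨hc1, hc2, hc3⟩ := hc
  by_contra h0
  rw [deg3_iff ht hi ha] at hc1
  by_cases hodd : a % 2 = 1
  · -- a odd; pick an even interior neighbour
    have hkey : ∀ u (hu : u ∈ {m : ℤ | -(2 ^ (i+1)) ≤ m ∧ m ≤ 2 ^ (i+1)}),
        (u = a - 1 ∨ u = a + 1) → u % 2 = 0 ∧ u ≠ 0 ∧ u ≠ 2 ^ (i+1) ∧ u ≠ -(2 ^ (i+1)) → False := by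
      intro u hu hor hd
      exact hc2 ⟨u, hu⟩ (path_adj ha hu (by omega)) ((deg3_iff ht hi hu).2 hd)
    by_cases hpos : 1 ≤ a
    · by_cases hsm : a ≤ 2 ^ (i + 1) - 3
      · exact hkey (a + 1) ⟨by omega, by omega⟩ (by omega) ⟨by omega, by omega, by omega, by omega⟩
      · -- a = N - 1
        have haN : a = 2 ^ (i + 1) - 1 := by omega
        exact hkey (a - 1) ⟨by omega, by omega⟩ (by omega) ⟨by omega, by omega, by omega, by omega⟩
    · by_cases hsm : -(2 ^ (i + 1)) + 3 ≤ a
      · exact hkey (a - 1) ⟨by omega, by omega⟩ (by omega) ⟨by omega, by omega, by omega, by omega⟩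
      · have haN : a = -(2 ^ (i + 1)) + 1 := by omega
        exact hkey (a + 1) ⟨by omega, by omega⟩ (by omega) ⟨by omega, by omega, by omega, by omega⟩
  · -- a even, so a = N or a = -N
    have he : a % 2 = 0 := by omega
    have haOr : a = 2 ^ (i + 1) ∨ a = -(2 ^ (i + 1)) := by
      by_contra hcon
      push_neg at hcon
      exact hc1 ⟨he, h0, hcon.1, hcon.2⟩
    rcases haOr with haN | haN
    · by_cases hT : t (2 ^ i) = 2 ^ i
      · -- chord N -N, second neighbour -N+1 is odd
        have hm : (-(2 ^ (i+1)) : ℤ) ∈ {m : ℤ | -(2 ^ (i+1)) ≤ m ∧ m ≤ 2 ^ (i+1)} :=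
          ⟨by omega, by omega⟩
        have hm2' : (-(2 ^ (i+1)) + 1 : ℤ) ∈ {m : ℤ | -(2 ^ (i+1)) ≤ m ∧ m ≤ 2 ^ (i+1)} :=
          ⟨by omega, by omega⟩
        have hadj1 : (Gsi t i).Adj ⟨a, ha⟩ ⟨-(2 ^ (i+1)), hm⟩ := by
          refine chord_adj ha hm (2 ^ i) Nat.one_le_two_pow (by omega) ?_
          rw [hT]; omega
        have hadj2 : (Gsi t i).Adj ⟨-(2 ^ (i+1)), hm⟩ ⟨-(2 ^ (i+1)) + 1, hm2'⟩ :=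
          path_adj hm hm2' (by omega)
        have hne : (⟨-(2 ^ (i+1)) + 1, hm2'⟩ : {m : ℤ | -(2 ^ (i+1)) ≤ m ∧ m ≤ 2 ^ (i+1)}) ≠ ⟨a, ha⟩ := by
          intro h; rw [Subtype.mk.injEq] at h; omega
        have := ((deg3_iff ht hi hm2').1 (hc3 _ _ hadj1 hadj2 hne)).1
        omega
      · -- chord to interior even vertex
        have htb := seg_mem ht hi (2 ^ i) Nat.one_le_two_pow le_rfl
        have htb1 : (1 : ℤ) ≤ ((t (2 ^ i) : ℕ) : ℤ) := by exact_mod_cast htb.1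
        have htb2 : ((t (2 ^ i) : ℕ) : ℤ) ≤ ((2 ^ i : ℕ) : ℤ) := by exact_mod_cast htb.2
        have htb3 : ((t (2 ^ i) : ℕ) : ℤ) ≠ ((2 ^ i : ℕ) : ℤ) := by
          intro h; exact hT (by exact_mod_cast h)
        have hm : (-(2 * ((t (2 ^ i) : ℕ) : ℤ))) ∈ {m : ℤ | -(2 ^ (i+1)) ≤ m ∧ m ≤ 2 ^ (i+1)} :=
          ⟨by omega, by omega⟩
        have hadj1 : (Gsi t i).Adj ⟨a, ha⟩ ⟨-(2 * ((t (2 ^ i) : ℕ) : ℤ)), hm⟩ :=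
          chord_adj ha hm (2 ^ i) Nat.one_le_two_pow (by omega) rfl
        exact hc2 _ hadj1 ((deg3_iff ht hi hm).2 ⟨by omega, by omega, by omega, by omega⟩)
    · -- a = -N
      obtain ⟨n₀, hn₀1, hn₀2, hn₀3⟩ := seg_surj ht hi (2 ^ i) Nat.one_le_two_pow le_rfl
      have hn₀Z : (1 : ℤ) ≤ (n₀ : ℤ) := by exact_mod_cast hn₀1
      have hn₀Z2 : (n₀ : ℤ) ≤ ((2 ^ i : ℕ) : ℤ) := by exact_mod_cast hn₀2
      by_cases hT : n₀ = 2 ^ i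
      · have hm : ((2 ^ (i+1) : ℤ)) ∈ {m : ℤ | -(2 ^ (i+1)) ≤ m ∧ m ≤ 2 ^ (i+1)} :=
          ⟨by omega, by omega⟩
        have hm2' : ((2 ^ (i+1) : ℤ) - 1) ∈ {m : ℤ | -(2 ^ (i+1)) ≤ m ∧ m ≤ 2 ^ (i+1)} :=
          ⟨by omega, by omega⟩
        have hadj1 : (Gsi t i).Adj ⟨a, ha⟩ ⟨(2 ^ (i+1) : ℤ), hm⟩ := by
          refine (chord_adj hm ha n₀ hn₀1 ?_ ?_).symm
          · rw [hT]; omega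
          · rw [hn₀3]; omega
        have hadj2 : (Gsi t i).Adj ⟨(2 ^ (i+1) : ℤ), hm⟩ ⟨(2 ^ (i+1) : ℤ) - 1, hm2'⟩ :=
          path_adj hm hm2' (by omega)
        have hne : (⟨(2 ^ (i+1) : ℤ) - 1, hm2'⟩ : {m : ℤ | -(2 ^ (i+1)) ≤ m ∧ m ≤ 2 ^ (i+1)}) ≠ ⟨a, ha⟩ := by
          intro h; rw [Subtype.mk.injEq] at h; omega
        have := ((deg3_iff ht hi hm2').1 (hc3 _ _ hadj1 hadj2 hne)).1
        omega
      · have hTZ : (n₀ : ℤ) ≠ ((2 ^ i : ℕ) : ℤ) := by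
          intro h; exact hT (by exact_mod_cast h)
        have hm : ((2 * (n₀ : ℤ))) ∈ {m : ℤ | -(2 ^ (i+1)) ≤ m ∧ m ≤ 2 ^ (i+1)} :=
          ⟨by omega, by omega⟩
        have hadj1 : (Gsi t i).Adj ⟨a, ha⟩ ⟨2 * (n₀ : ℤ), hm⟩ := by
          refine (chord_adj hm ha n₀ hn₀1 rfl ?_).symm
          rw [hn₀3]; omega
        exact hc2 _ hadj1 ((deg3_iff ht hi hm).2 ⟨by omega, by omega, by omega, by omega⟩)

noncomputable def sInv (s : ℕ → ℕ) (hs : SegPreserving s) : ℕ → ℕ :=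
  fun m => (Equiv.ofBijective s hs.1).symm m

lemma sInv_left (hs : SegPreserving s) (n : ℕ) : sInv s hs (s n) = n :=
  (Equiv.ofBijective s hs.1).symm_apply_apply n

lemma sInv_right (hs : SegPreserving s) (m : ℕ) : s (sInv s hs m) = m :=
  (Equiv.ofBijective s hs.1).apply_symm_apply m

lemma segPreserving_inv (hs : SegPreserving s) : SegPreserving (sInv s hs) := by
  constructor
  · exact (Equiv.ofBijective s hs.1).symm.bijective
  · intro i hi
    ext x
    constructor
    · rintro ⟨y, hy, rfl⟩
      have : y ∈ s '' {n | 1 ≤ n ∧ n ≤ 2 ^ i} := by rw [hs.2 i hi]; exact hy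
      obtain ⟨z, hz, rfl⟩ := this
      rw [sInv_left hs]; exact hz
    · intro hx
      have hsx : s x ∈ s '' {n | 1 ≤ n ∧ n ≤ 2 ^ i} := Set.mem_image_of_mem _ hx
      rw [hs.2 i hi] at hsx
      exact ⟨s x, hsx, sInv_left hs x⟩

lemma neg_mem {m : ℤ} (h : m ∈ {m : ℤ | -(2 ^ (i+1)) ≤ m ∧ m ≤ 2 ^ (i+1)}) :
    -m ∈ {m : ℤ | -(2 ^ (i+1)) ≤ m ∧ m ≤ 2 ^ (i+1)} := by
  have := (mem_iff i m).1 h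
  exact (mem_iff i (-m)).2 (by omega)

def negEquiv (i : ℕ) : {m : ℤ | -(2 ^ (i+1)) ≤ m ∧ m ≤ 2 ^ (i+1)} ≃
    {m : ℤ | -(2 ^ (i+1)) ≤ m ∧ m ≤ 2 ^ (i+1)} where
  toFun v := ⟨-v.1, neg_mem v.2⟩
  invFun v := ⟨-v.1, neg_mem v.2⟩
  left_inv v := Subtype.ext (by simp)
  right_inv v := Subtype.ext (by simp)

lemma negAdjCore {s' : ℕ → ℕ} (hs : SegPreserving s) (h1 : ∀ n, 1 ≤ n → s' (s n) = n)
    {a b : ℤ} (ha : a ∈ {m : ℤ | -(2 ^ (i+1)) ≤ m ∧ m ≤ 2 ^ (i+1)})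
    (hb : b ∈ {m : ℤ | -(2 ^ (i+1)) ≤ m ∧ m ≤ 2 ^ (i+1)})
    (h : (Gsi s i).Adj ⟨a, ha⟩ ⟨b, hb⟩) :
    (Gsi s' i).Adj ⟨-a, neg_mem ha⟩ ⟨-b, neg_mem hb⟩ := by
  rw [adjiff s i ha hb] at h
  rw [adjiff s' i (neg_mem ha) (neg_mem hb)]
  rcases h with ((h | h) | ⟨n, hn1, hb1, hb2, (⟨h1', h2'⟩ | ⟨h1', h2'⟩)⟩)
  · exact Or.inl (Or.inr (by omega))
  · exact Or.inl (Or.inl (by omega))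
  · refine Or.inr ⟨s n, s_pos hs n hn1, by omega, ?_, Or.inr ⟨by omega, ?_⟩⟩
    · rw [h1 n hn1]; omega
    · rw [h1 n hn1]; omega
  · refine Or.inr ⟨s n, s_pos hs n hn1, by omega, ?_, Or.inl ⟨by omega, ?_⟩⟩
    · rw [h1 n hn1]; omega
    · rw [h1 n hn1]; omega

def negIso {s' : ℕ → ℕ} (hs : SegPreserving s) (hs' : SegPreserving s')
    (h1 : ∀ n, 1 ≤ n → s' (s n) = n) (h2 : ∀ n, 1 ≤ n → s (s' n) = n) :
    (Gsi s i) ≃g (Gsi s' i) where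
  toEquiv := negEquiv i
  map_rel_iff' := by
    rintro ⟨a, ha⟩ ⟨b, hb⟩
    constructor
    · intro h
      have := negAdjCore hs' h2 (neg_mem ha) (neg_mem hb) h
      have e1 : (⟨-(-a), neg_mem (neg_mem ha)⟩ :
          {m : ℤ | -(2 ^ (i+1)) ≤ m ∧ m ≤ 2 ^ (i+1)}) = ⟨a, ha⟩ := Subtype.ext (by ring)
      have e2 : (⟨-(-b), neg_mem (neg_mem hb)⟩ :
          {m : ℤ | -(2 ^ (i+1)) ≤ m ∧ m ≤ 2 ^ (i+1)}) = ⟨b, hb⟩ := Subtype.ext (by ring)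
      rwa [e1, e2] at this
    · intro h
      exact negAdjCore hs h1 ha hb h

lemma stepA (hs : SegPreserving s) (ht : SegPreserving t) (hi : 1 ≤ i)
    (φ : Gsi s i ≃g Gsi t i) (k : ℤ) (hk1 : 1 ≤ k) (hkN : k + 1 ≤ 2 ^ (i + 1))
    (hfix : ∀ (m : ℤ) (hm : m ∈ {m : ℤ | -(2 ^ (i+1)) ≤ m ∧ m ≤ 2 ^ (i+1)}),
      -k ≤ m → m ≤ k → φ ⟨m, hm⟩ = ⟨m, hm⟩) :
    (∀ (hm : (k + 1 : ℤ) ∈ {m : ℤ | -(2 ^ (i+1)) ≤ m ∧ m ≤ 2 ^ (i+1)}),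
        φ ⟨k + 1, hm⟩ = ⟨k + 1, hm⟩) ∨
      (∀ n : ℕ, 1 ≤ n → n ≤ 2 ^ i → t n = s n) := by
  have hN := hNM i
  have hM := hM2 hi
  have hmk : k ∈ {m : ℤ | -(2 ^ (i+1)) ≤ m ∧ m ≤ 2 ^ (i+1)} := ⟨by omega, by omega⟩
  have hm1 : (k + 1) ∈ {m : ℤ | -(2 ^ (i+1)) ≤ m ∧ m ≤ 2 ^ (i+1)} := ⟨by omega, by omega⟩
  have hk := hfix k hmk (by omega) le_rfl
  obtain ⟨wv, hwmem, hw⟩ : ∃ (wv : ℤ) (hm : wv ∈ {m : ℤ | -(2 ^ (i+1)) ≤ m ∧ m ≤ 2 ^ (i+1)}),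
      φ ⟨k + 1, hm1⟩ = ⟨wv, hm⟩ := ⟨(φ ⟨k + 1, hm1⟩).1, (φ ⟨k + 1, hm1⟩).2, rfl⟩
  have hwB := (mem_iff i wv).1 hwmem
  have hadjB : (Gsi t i).Adj ⟨k, hmk⟩ ⟨wv, hwmem⟩ := by
    have hadjA : (Gsi s i).Adj ⟨k, hmk⟩ ⟨k + 1, hm1⟩ := path_adj hmk hm1 (by omega)
    have := φ.map_adj_iff.2 hadjA
    rwa [hk, hw] at this
  have finish : wv = k + 1 → (∀ (hm : (k + 1 : ℤ) ∈ {m : ℤ | -(2 ^ (i+1)) ≤ m ∧ m ≤ 2 ^ (i+1)}),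
      φ ⟨k + 1, hm⟩ = ⟨k + 1, hm⟩) := by
    intro hval hm
    have : φ ⟨k + 1, hm1⟩ = ⟨k + 1, hm1⟩ := by
      rw [hw]; exact Subtype.ext hval
    exact this
  -- helper for injectivity contradictions with fixed vertices
  have inj_fix : ∀ (z : ℤ) (hz : z ∈ {m : ℤ | -(2 ^ (i+1)) ≤ m ∧ m ≤ 2 ^ (i+1)}),
      -k ≤ z → z ≤ k → wv = z → False := by
    intro z hz hz1 hz2 hzv
    have h1 : φ ⟨z, hz⟩ = ⟨z, hz⟩ := hfix z hz hz1 hz2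
    have h2 : φ ⟨k + 1, hm1⟩ = ⟨z, hz⟩ := by rw [hw]; exact Subtype.ext hzv
    have := φ.toEquiv.injective (h2.trans h1.symm)
    rw [Subtype.mk.injEq] at this; omega
  by_cases hodd : k % 2 = 1
  · -- k odd
    rcases nbr1 ht hmk hwmem (Or.inl hodd) hadjB with hval | hval
    · exact absurd hval (fun h => inj_fix (k - 1) ⟨by omega, by omega⟩ (by omega) (by omega) h)
    · exact Or.inl (finish hval)
  · -- k even, k = 2n
    have hkE : k % 2 = 0 := by omega
    have hkN2 : k ≤ 2 ^ (i + 1) - 2 := by omega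
    set n : ℕ := (k / 2).toNat with hn
    have hnz : (n : ℤ) = k / 2 := Int.toNat_of_nonneg (by omega)
    have han : k = 2 * (n : ℤ) := by omega
    have hn1 : 1 ≤ n := by omega
    have hn2 : n ≤ 2 ^ i := by
      have : (n : ℤ) ≤ ((2 ^ i : ℕ) : ℤ) := by omega
      exact_mod_cast this
    have hsn := seg_mem hs hi n hn1 hn2
    have htn := seg_mem ht hi n hn1 hn2
    have hsnZ : (1 : ℤ) ≤ ((s n : ℕ) : ℤ) := by exact_mod_cast hsn.1
    have hsnZ2 : ((s n : ℕ) : ℤ) ≤ ((2 ^ i : ℕ) : ℤ) := by exact_mod_cast hsn.2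
    have htnZ : (1 : ℤ) ≤ ((t n : ℕ) : ℤ) := by exact_mod_cast htn.1
    have htnZ2 : ((t n : ℕ) : ℤ) ≤ ((2 ^ i : ℕ) : ℤ) := by exact_mod_cast htn.2
    rcases nbr2 hmk hwmem n hn1 han hadjB with hval | hval | hval
    · exact absurd hval (fun h => inj_fix (k - 1) ⟨by omega, by omega⟩ (by omega) (by omega) h)
    · exact Or.inl (finish hval)
    · -- wv = -2 t n
      by_cases hsnk : 2 * ((s n : ℕ) : ℤ) ≤ k
      · exfalso
        have hmz : (-(2 * ((s n : ℕ) : ℤ))) ∈ {m : ℤ | -(2 ^ (i+1)) ≤ m ∧ m ≤ 2 ^ (i+1)} :=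
          ⟨by omega, by omega⟩
        have hadjC : (Gsi s i).Adj ⟨k, hmk⟩ ⟨-(2 * ((s n : ℕ) : ℤ)), hmz⟩ :=
          chord_adj hmk hmz n hn1 han rfl
        have hadjD : (Gsi t i).Adj ⟨k, hmk⟩ ⟨-(2 * ((s n : ℕ) : ℤ)), hmz⟩ := by
          have := φ.map_adj_iff.2 hadjC
          rwa [hk, hfix _ hmz (by omega) (by omega)] at this
        have := nbr2 hmk hmz n hn1 han hadjD
        exact inj_fix (-(2 * ((s n : ℕ) : ℤ))) hmz (by omega) (by omega) (by omega)
      · by_cases htnk : 2 * ((t n : ℕ) : ℤ) ≤ k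
        · exact absurd hval
            (fun h => inj_fix (-(2 * ((t n : ℕ) : ℤ))) ⟨by omega, by omega⟩ (by omega) (by omega) h)
        · -- both s n and t n exceed k/2
          by_cases htn2i : t n = 2 ^ i
          · -- wv = -N; find φ (k+2)
            have htnM : ((t n : ℕ) : ℤ) = ((2 ^ i : ℕ) : ℤ) := by exact_mod_cast htn2i
            have hm2 : (k + 2) ∈ {m : ℤ | -(2 ^ (i+1)) ≤ m ∧ m ≤ 2 ^ (i+1)} := ⟨by omega, by omega⟩
            obtain ⟨w2, hw2mem, hw2⟩ : ∃ (w2 : ℤ) (hm : w2 ∈ {m : ℤ | -(2 ^ (i+1)) ≤ m ∧ m ≤ 2 ^ (i+1)}),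
                φ ⟨k + 2, hm2⟩ = ⟨w2, hm⟩ := ⟨(φ ⟨k + 2, hm2⟩).1, (φ ⟨k + 2, hm2⟩).2, rfl⟩
            have hw2B := (mem_iff i w2).1 hw2mem
            have hadjB2 : (Gsi t i).Adj ⟨wv, hwmem⟩ ⟨w2, hw2mem⟩ := by
              have hadjA2 : (Gsi s i).Adj ⟨k + 1, hm1⟩ ⟨k + 2, hm2⟩ := path_adj hm1 hm2 (by omega)
              have := φ.map_adj_iff.2 hadjA2
              rwa [hw, hw2] at this
            have hw2val : w2 = wv + 1 := by
              have ham : wv = -(2 * ((2 ^ i : ℕ) : ℤ)) := by omega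
              rcases nbr3 hwmem hw2mem (2 ^ i) Nat.one_le_two_pow ham hadjB2 with h' | h' | ⟨n', hn'1, hn'2, hn'3, hn'4⟩
              · exfalso; omega
              · omega
              · exfalso
                have hnn' : n' = n := ht.1.1 (by rw [hn'3, htn2i])
                subst hnn'
                have h2 : φ ⟨k + 2, hm2⟩ = ⟨k, hmk⟩ := by rw [hw2]; exact Subtype.ext (show w2 = k by omega)
                have := φ.toEquiv.injective (h2.trans hk.symm)
                rw [Subtype.mk.injEq] at this; omega
            by_cases hk2N : k + 2 = 2 ^ (i + 1)
            · -- TERMINAL CASE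
              refine Or.inr ?_
              have hsn2i : s n = 2 ^ i := by
                have : ((s n : ℕ) : ℤ) = ((2 ^ i : ℕ) : ℤ) := by omega
                exact_mod_cast this
              have hnval : (n : ℤ) = ((2 ^ i : ℕ) : ℤ) - 1 := by omega
              have hnn : n + 1 = 2 ^ i := by
                have : ((n + 1 : ℕ) : ℤ) = ((2 ^ i : ℕ) : ℤ) := by push_cast; omega
                exact_mod_cast this
              have hne2i : n ≠ 2 ^ i := by omega
              -- s (2^i) = n
              have hs2i := seg_mem hs hi (2 ^ i) Nat.one_le_two_pow le_rfl
              have hs2iZ : (1 : ℤ) ≤ ((s (2 ^ i) : ℕ) : ℤ) := by exact_mod_cast hs2i.1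
              have hs2iZ2 : ((s (2 ^ i) : ℕ) : ℤ) ≤ ((2 ^ i : ℕ) : ℤ) := by exact_mod_cast hs2i.2
              have hs2ine : s (2 ^ i) ≠ 2 ^ i := by
                intro h
                exact hne2i (hs.1.1 (hsn2i.trans h.symm))
              have hs2ineZ : ((s (2 ^ i) : ℕ) : ℤ) ≠ ((2 ^ i : ℕ) : ℤ) := by
                intro h; exact hs2ine (by exact_mod_cast h)
              have hmS : (-(2 * ((s (2 ^ i) : ℕ) : ℤ))) ∈ {m : ℤ | -(2 ^ (i+1)) ≤ m ∧ m ≤ 2 ^ (i+1)} :=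
                ⟨by omega, by omega⟩
              have hadjN : (Gsi s i).Adj ⟨k + 2, hm2⟩ ⟨-(2 * ((s (2 ^ i) : ℕ) : ℤ)), hmS⟩ :=
                chord_adj hm2 hmS (2 ^ i) Nat.one_le_two_pow (by omega) rfl
              have hadjN' : (Gsi t i).Adj ⟨w2, hw2mem⟩ ⟨-(2 * ((s (2 ^ i) : ℕ) : ℤ)), hmS⟩ := by
                have := φ.map_adj_iff.2 hadjN
                rwa [hw2, hfix _ hmS (by omega) (by omega)] at this
              have hs2i_eq : ((s (2 ^ i) : ℕ) : ℤ) = ((2 ^ i : ℕ) : ℤ) - 1 := by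
                have := nbr1 ht hw2mem hmS (Or.inl (by omega)) hadjN'
                omega
              have hs2i_val : s (2 ^ i) = n := by
                have : ((s (2 ^ i) : ℕ) : ℤ) = (n : ℤ) := by omega
                exact_mod_cast this
              -- t (2^i) = n
              have hm3 : (-k - 1) ∈ {m : ℤ | -(2 ^ (i+1)) ≤ m ∧ m ≤ 2 ^ (i+1)} := ⟨by omega, by omega⟩
              have hmk' : (-k) ∈ {m : ℤ | -(2 ^ (i+1)) ≤ m ∧ m ≤ 2 ^ (i+1)} := ⟨by omega, by omega⟩
              obtain ⟨w3, hw3mem, hw3⟩ : ∃ (w3 : ℤ) (hm : w3 ∈ {m : ℤ | -(2 ^ (i+1)) ≤ m ∧ m ≤ 2 ^ (i+1)}),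
                  φ ⟨-k - 1, hm3⟩ = ⟨w3, hm⟩ := ⟨(φ ⟨-k - 1, hm3⟩).1, (φ ⟨-k - 1, hm3⟩).2, rfl⟩
              have hw3B := (mem_iff i w3).1 hw3mem
              have hadjB3 : (Gsi t i).Adj ⟨-k, hmk'⟩ ⟨w3, hw3mem⟩ := by
                have hadjA3 : (Gsi s i).Adj ⟨-k, hmk'⟩ ⟨-k - 1, hm3⟩ := path_adj hmk' hm3 (by omega)
                have := φ.map_adj_iff.2 hadjA3
                rwa [hfix _ hmk' (by omega) (by omega), hw3] at this
              have ht2i_val : t (2 ^ i) = n := by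
                have hamk : -k = -(2 * (n : ℤ)) := by omega
                rcases nbr3 hmk' hw3mem n hn1 hamk hadjB3 with h' | h' | ⟨n', hn'1, hn'2, hn'3, hn'4⟩
                · -- w3 = -k-1 = w2 (value of φ at k+2), contradiction by injectivity
                  exfalso
                  have h2' : φ ⟨-k - 1, hm3⟩ = φ ⟨k + 2, hm2⟩ := by
                    rw [hw3, hw2]; exact Subtype.ext (show w3 = w2 by omega)
                  have := φ.toEquiv.injective h2'
                  rw [Subtype.mk.injEq] at this; omega
                · exfalso
                  have hmm : (-k + 1) ∈ {m : ℤ | -(2 ^ (i+1)) ≤ m ∧ m ≤ 2 ^ (i+1)} := ⟨by omega, by omega⟩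
                  have h1' : φ ⟨-k + 1, hmm⟩ = ⟨-k + 1, hmm⟩ := hfix _ hmm (by omega) (by omega)
                  have h2' : φ ⟨-k - 1, hm3⟩ = ⟨-k + 1, hmm⟩ := by
                    rw [hw3]; exact Subtype.ext (show w3 = -k + 1 by omega)
                  have := φ.toEquiv.injective (h2'.trans h1'.symm)
                  rw [Subtype.mk.injEq] at this; omega
                · -- chord case: 2 n' = N forced
                  have hn'Z : (1 : ℤ) ≤ (n' : ℤ) := by exact_mod_cast hn'1
                  by_cases hsmall : 2 * (n' : ℤ) ≤ k
                  · exfalso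
                    have hmm : (2 * (n' : ℤ)) ∈ {m : ℤ | -(2 ^ (i+1)) ≤ m ∧ m ≤ 2 ^ (i+1)} :=
                      ⟨by omega, by omega⟩
                    have h1' : φ ⟨2 * (n' : ℤ), hmm⟩ = ⟨2 * (n' : ℤ), hmm⟩ :=
                      hfix _ hmm (by omega) (by omega)
                    have h2' : φ ⟨-k - 1, hm3⟩ = ⟨2 * (n' : ℤ), hmm⟩ := by
                      rw [hw3]; exact Subtype.ext (show w3 = 2 * (n' : ℤ) by omega)
                    have := φ.toEquiv.injective (h2'.trans h1'.symm)
                    rw [Subtype.mk.injEq] at this; omega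
                  · have : (n' : ℤ) = ((2 ^ i : ℕ) : ℤ) := by omega
                    have hn'eq : n' = 2 ^ i := by exact_mod_cast this
                    rw [← hn'eq]; exact hn'3
              -- conclude
              intro m' hm'1 hm'2
              by_cases hc1 : m' = 2 ^ i
              · rw [hc1, ht2i_val, hs2i_val]
              · by_cases hc2 : m' = n
                · rw [hc2, htn2i, hsn2i]
                · have hsm' := seg_mem hs hi m' hm'1 hm'2
                  have hsm'1 : (1 : ℤ) ≤ ((s m' : ℕ) : ℤ) := by exact_mod_cast hsm'.1
                  have hsm'2 : ((s m' : ℕ) : ℤ) ≤ ((2 ^ i : ℕ) : ℤ) := by exact_mod_cast hsm'.2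
                  have hm'Z1 : (1 : ℤ) ≤ (m' : ℤ) := by exact_mod_cast hm'1
                  have hm'Z2 : (m' : ℤ) ≤ ((2 ^ i : ℕ) : ℤ) := by exact_mod_cast hm'2
                  have hm'ne : (m' : ℤ) ≠ ((2 ^ i : ℕ) : ℤ) := by
                    intro h; exact hc1 (by exact_mod_cast h)
                  have hm'ne2 : (m' : ℤ) ≠ (n : ℤ) := by
                    intro h; exact hc2 (by exact_mod_cast h)
                  have hsne1 : s m' ≠ 2 ^ i := by
                    intro h; exact hc2 (hs.1.1 (h.trans hsn2i.symm))
                  have hsne2 : s m' ≠ n := by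
                    intro h; exact hc1 (hs.1.1 (h.trans hs2i_val.symm))
                  have hsne1Z : ((s m' : ℕ) : ℤ) ≠ ((2 ^ i : ℕ) : ℤ) := by
                    intro h; exact hsne1 (by exact_mod_cast h)
                  have hsne2Z : ((s m' : ℕ) : ℤ) ≠ (n : ℤ) := by
                    intro h; exact hsne2 (by exact_mod_cast h)
                  have hmm1 : (2 * (m' : ℤ)) ∈ {m : ℤ | -(2 ^ (i+1)) ≤ m ∧ m ≤ 2 ^ (i+1)} :=
                    ⟨by omega, by omega⟩
                  have hmm2 : (-(2 * ((s m' : ℕ) : ℤ))) ∈ {m : ℤ | -(2 ^ (i+1)) ≤ m ∧ m ≤ 2 ^ (i+1)} :=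
                    ⟨by omega, by omega⟩
                  have hadjC : (Gsi s i).Adj ⟨2 * (m' : ℤ), hmm1⟩ ⟨-(2 * ((s m' : ℕ) : ℤ)), hmm2⟩ :=
                    chord_adj hmm1 hmm2 m' hm'1 rfl rfl
                  have hadjD : (Gsi t i).Adj ⟨2 * (m' : ℤ), hmm1⟩ ⟨-(2 * ((s m' : ℕ) : ℤ)), hmm2⟩ := by
                    have := φ.map_adj_iff.2 hadjC
                    rwa [hfix _ hmm1 (by omega) (by omega), hfix _ hmm2 (by omega) (by omega)] at this
                  have := nbr2 hmm1 hmm2 m' hm'1 rfl hadjD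
                  have : ((t m' : ℕ) : ℤ) = ((s m' : ℕ) : ℤ) := by omega
                  exact_mod_cast this
            · -- k + 2 < N : contradiction via degree of k+2
              exfalso
              have hd : Deg3 (Gsi s i) ⟨k + 2, hm2⟩ :=
                (deg3_iff hs hi hm2).2 ⟨by omega, by omega, by omega, by omega⟩
              have hd2 : Deg3 (Gsi t i) ⟨w2, hw2mem⟩ := by
                have := (deg3_iff' φ _).1 hd
                rwa [hw2] at this
              have := ((deg3_iff ht hi hw2mem).1 hd2).1
              omega
          · -- t n < 2^i : contradiction via degree of k+1
            exfalso
            have htnne : ((t n : ℕ) : ℤ) ≠ ((2 ^ i : ℕ) : ℤ) := by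
              intro h; exact htn2i (by exact_mod_cast h)
            have hd : Deg3 (Gsi t i) ⟨wv, hwmem⟩ :=
              (deg3_iff ht hi hwmem).2 ⟨by omega, by omega, by omega, by omega⟩
            have hd2 : Deg3 (Gsi s i) ⟨k + 1, hm1⟩ := by
              rw [deg3_iff' φ _, hw]; exact hd
            have := ((deg3_iff hs hi hm1).1 hd2).1
            omega

lemma rigid (hs : SegPreserving s) (ht : SegPreserving t) (hi : 1 ≤ i)
    (φ : Gsi s i ≃g Gsi t i)
    (h0 : ∀ (hm : (0 : ℤ) ∈ {m : ℤ | -(2 ^ (i+1)) ≤ m ∧ m ≤ 2 ^ (i+1)}), φ ⟨0, hm⟩ = ⟨0, hm⟩)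
    (h1 : ∀ (hm : (1 : ℤ) ∈ {m : ℤ | -(2 ^ (i+1)) ≤ m ∧ m ≤ 2 ^ (i+1)}), φ ⟨1, hm⟩ = ⟨1, hm⟩) :
    ∀ n : ℕ, 1 ≤ n → n ≤ 2 ^ i → t n = s n := by
  have hN := hNM i
  have hM := hM2 hi
  have mem0 : (0 : ℤ) ∈ {m : ℤ | -(2 ^ (i+1)) ≤ m ∧ m ≤ 2 ^ (i+1)} := ⟨by omega, by omega⟩
  have memp : (1 : ℤ) ∈ {m : ℤ | -(2 ^ (i+1)) ≤ m ∧ m ≤ 2 ^ (i+1)} := ⟨by omega, by omega⟩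
  have memn : (-1 : ℤ) ∈ {m : ℤ | -(2 ^ (i+1)) ≤ m ∧ m ≤ 2 ^ (i+1)} := ⟨by omega, by omega⟩
  -- φ (-1) = -1
  have hneg1 : φ ⟨-1, memn⟩ = ⟨-1, memn⟩ := by
    obtain ⟨wv, hwmem, hw⟩ : ∃ (wv : ℤ) (hm : wv ∈ {m : ℤ | -(2 ^ (i+1)) ≤ m ∧ m ≤ 2 ^ (i+1)}),
        φ ⟨-1, memn⟩ = ⟨wv, hm⟩ := ⟨(φ ⟨-1, memn⟩).1, (φ ⟨-1, memn⟩).2, rfl⟩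
    have hadj : (Gsi t i).Adj ⟨0, mem0⟩ ⟨wv, hwmem⟩ := by
      have hadjA : (Gsi s i).Adj ⟨0, mem0⟩ ⟨-1, memn⟩ := path_adj mem0 memn (by omega)
      have := φ.map_adj_iff.2 hadjA
      rwa [h0 mem0, hw] at this
    rcases nbr1 ht mem0 hwmem (Or.inr rfl) hadj with hval | hval
    · rw [hw]; exact Subtype.ext (show wv = -1 by omega)
    · exfalso
      have h2 : φ ⟨-1, memn⟩ = ⟨1, memp⟩ := by rw [hw]; exact Subtype.ext (show wv = 1 by omega)
      have := φ.toEquiv.injective (h2.trans (h1 memp).symm)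
      rw [Subtype.mk.injEq] at this; omega
  -- conjugated isomorphism
  have hs' := segPreserving_inv hs
  have ht' := segPreserving_inv ht
  set ψ : Gsi (sInv s hs) i ≃g Gsi (sInv t ht) i :=
    (((negIso hs hs' (fun n _ => sInv_left hs n) (fun n _ => sInv_right hs n)).symm.trans
      φ).trans (negIso ht ht' (fun n _ => sInv_left ht n) (fun n _ => sInv_right ht n))) with hψ
  have hψval : ∀ (m : ℤ) (hm : m ∈ {m : ℤ | -(2 ^ (i+1)) ≤ m ∧ m ≤ 2 ^ (i+1)}),
      ψ ⟨m, hm⟩ = ⟨-(φ ⟨-m, neg_mem hm⟩).1, neg_mem (φ ⟨-m, neg_mem hm⟩).2⟩ := by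
    intro m hm
    rw [hψ]
    rfl
  -- the induction
  have key : ∀ K : ℕ, 1 ≤ K → (K : ℤ) ≤ 2 ^ (i + 1) →
      ((∀ (m : ℤ) (hm : m ∈ {m : ℤ | -(2 ^ (i+1)) ≤ m ∧ m ≤ 2 ^ (i+1)}),
        -(K : ℤ) ≤ m → m ≤ (K : ℤ) → φ ⟨m, hm⟩ = ⟨m, hm⟩) ∨
       (∀ n : ℕ, 1 ≤ n → n ≤ 2 ^ i → t n = s n)) := by
    intro K
    induction K with
    | zero => intro h; omega
    | succ K ih =>
      intro _ hKN
      by_cases hK0 : K = 0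
      · subst hK0
        left
        intro m hm hm1 hm2
        have : m = -1 ∨ m = 0 ∨ m = 1 := by push_cast at hm1 hm2; omega
        rcases this with rfl | rfl | rfl
        · exact hneg1
        · exact h0 hm
        · exact h1 hm
      · have hK1 : 1 ≤ K := by omega
        have hKN' : (K : ℤ) ≤ 2 ^ (i + 1) := by push_cast at hKN ⊢; omega
        rcases ih hK1 hKN' with hfix | hdone
        · -- extend the fixed region by one on each side
          rcases stepA hs ht hi φ (K : ℤ) (by exact_mod_cast hK1) (by push_cast at hKN ⊢; omega)
              hfix with hpos | hdone
          · rcases stepA hs' ht' hi ψ (K : ℤ) (by exact_mod_cast hK1) (by push_cast at hKN ⊢; omega)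
                (by
                  intro m hm hm1 hm2
                  rw [hψval m hm]
                  have := hfix (-m) (neg_mem hm) (by omega) (by omega)
                  rw [this]
                  exact Subtype.ext (show -(-m) = m by omega)) with hneg | hdone'
            · left
              intro m hm hm1 hm2
              by_cases hc : -(K : ℤ) ≤ m ∧ m ≤ (K : ℤ)
              · exact hfix m hm hc.1 hc.2
              · push_cast at hm1 hm2
                have : m = (K : ℤ) + 1 ∨ m = -((K : ℤ) + 1) := by omega
                rcases this with rfl | hmval
                · exact hpos hm
                · have hmm : ((K : ℤ) + 1) ∈ {m : ℤ | -(2 ^ (i+1)) ≤ m ∧ m ≤ 2 ^ (i+1)} :=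
                    ⟨by omega, by omega⟩
                  have := hneg hmm
                  rw [hψval _ hmm] at this
                  have hval : -(φ ⟨-((K : ℤ) + 1), neg_mem hmm⟩).1 = (K : ℤ) + 1 :=
                    congrArg Subtype.val this
                  have heq : φ ⟨-((K : ℤ) + 1), neg_mem hmm⟩ = ⟨-((K : ℤ) + 1), neg_mem hmm⟩ :=
                    Subtype.ext (show (φ ⟨-((K : ℤ) + 1), neg_mem hmm⟩).1 = -((K : ℤ) + 1) by omega)
                  have e1 : (⟨m, hm⟩ : {m : ℤ | -(2 ^ (i+1)) ≤ m ∧ m ≤ 2 ^ (i+1)}) =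
                      ⟨-((K : ℤ) + 1), neg_mem hmm⟩ := Subtype.ext (show m = -((K : ℤ) + 1) by omega)
                  rw [e1]
                  exact heq
            · -- Done for the inverses; transfer
              right
              intro n hn1 hn2
              have hsn := seg_mem hs hi n hn1 hn2
              have := hdone' (s n) hsn.1 hsn.2
              rw [sInv_left hs] at this
              have h2 : t (sInv t ht (s n)) = s n := sInv_right ht (s n)
              rw [this] at h2
              exact h2
          · exact Or.inr hdone
        · exact Or.inr hdone
  -- conclude from the fully fixed map
  rcases key (2 ^ (i + 1)) Nat.one_le_two_pow (by push_cast; omega) with hfix | hdone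
  · intro n hn1 hn2
    have hsn := seg_mem hs hi n hn1 hn2
    have hsnZ : (1 : ℤ) ≤ ((s n : ℕ) : ℤ) := by exact_mod_cast hsn.1
    have hsnZ2 : ((s n : ℕ) : ℤ) ≤ ((2 ^ i : ℕ) : ℤ) := by exact_mod_cast hsn.2
    have hnZ : (1 : ℤ) ≤ (n : ℤ) := by exact_mod_cast hn1
    have hnZ2 : (n : ℤ) ≤ ((2 ^ i : ℕ) : ℤ) := by exact_mod_cast hn2
    have hKcast : ((2 ^ (i + 1) : ℕ) : ℤ) = (2 : ℤ) ^ (i + 1) := by push_cast; ring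
    have hmm1 : (2 * (n : ℤ)) ∈ {m : ℤ | -(2 ^ (i+1)) ≤ m ∧ m ≤ 2 ^ (i+1)} := ⟨by omega, by omega⟩
    have hmm2 : (-(2 * ((s n : ℕ) : ℤ))) ∈ {m : ℤ | -(2 ^ (i+1)) ≤ m ∧ m ≤ 2 ^ (i+1)} :=
      ⟨by omega, by omega⟩
    have hadjC : (Gsi s i).Adj ⟨2 * (n : ℤ), hmm1⟩ ⟨-(2 * ((s n : ℕ) : ℤ)), hmm2⟩ :=
      chord_adj hmm1 hmm2 n hn1 rfl rfl
    have hadjD : (Gsi t i).Adj ⟨2 * (n : ℤ), hmm1⟩ ⟨-(2 * ((s n : ℕ) : ℤ)), hmm2⟩ := by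
      have := φ.map_adj_iff.2 hadjC
      rwa [hfix _ hmm1 (by omega) (by omega), hfix _ hmm2 (by omega) (by omega)] at this
    have := nbr2 hmm1 hmm2 n hn1 rfl hadjD
    have htnZ : (1 : ℤ) ≤ ((t n : ℕ) : ℤ) := by
      have := s_pos ht n hn1; exact_mod_cast this
    have : ((t n : ℕ) : ℤ) = ((s n : ℕ) : ℤ) := by omega
    exact_mod_cast this
  · exact hdone

lemma forward_pos (hs : SegPreserving s) (ht : SegPreserving t) (hi : 1 ≤ i)
    (φ : Gsi s i ≃g Gsi t i) :
    (∀ n : ℕ, 1 ≤ n → n ≤ 2 ^ i → t n = s n) ∨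
      (∀ n : ℕ, 1 ≤ n → n ≤ 2 ^ i → t (s n) = n) := by
  have hN := hNM i
  have hM := hM2 hi
  have mem0 : (0 : ℤ) ∈ {m : ℤ | -(2 ^ (i+1)) ≤ m ∧ m ≤ 2 ^ (i+1)} := ⟨by omega, by omega⟩
  have memp : (1 : ℤ) ∈ {m : ℤ | -(2 ^ (i+1)) ≤ m ∧ m ≤ 2 ^ (i+1)} := ⟨by omega, by omega⟩
  have h00 : (φ ⟨0, mem0⟩).1 = 0 :=
    cent_only_zero ht hi (φ ⟨0, mem0⟩).2 (cent_map φ _ (cent_zero hs hi mem0))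
  have h0 : φ ⟨0, mem0⟩ = ⟨0, mem0⟩ := Subtype.ext h00
  obtain ⟨vv, hvm, hveq⟩ : ∃ (vv : ℤ) (hm : vv ∈ {m : ℤ | -(2 ^ (i+1)) ≤ m ∧ m ≤ 2 ^ (i+1)}),
      φ ⟨1, memp⟩ = ⟨vv, hm⟩ := ⟨(φ ⟨1, memp⟩).1, (φ ⟨1, memp⟩).2, rfl⟩
  have hv1 : (φ ⟨1, memp⟩).1 = vv := congrArg Subtype.val hveq
  have hadj : (Gsi t i).Adj ⟨0, mem0⟩ ⟨vv, hvm⟩ := by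
    have hadjA : (Gsi s i).Adj ⟨0, mem0⟩ ⟨1, memp⟩ := path_adj mem0 memp (by omega)
    have := φ.map_adj_iff.2 hadjA
    rwa [h0, hveq] at this
  rcases nbr1 ht mem0 hvm (Or.inr rfl) hadj with hval | hval
  · -- φ 1 = -1 : compose with the negation isomorphism
    right
    have ht' := segPreserving_inv ht
    set ψ : Gsi s i ≃g Gsi (sInv t ht) i :=
      φ.trans (negIso ht ht' (fun n _ => sInv_left ht n) (fun n _ => sInv_right ht n)) with hψ
    have hψval : ∀ (m : ℤ) (hm : m ∈ {m : ℤ | -(2 ^ (i+1)) ≤ m ∧ m ≤ 2 ^ (i+1)}),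
        ψ ⟨m, hm⟩ = ⟨-(φ ⟨m, hm⟩).1, neg_mem (φ ⟨m, hm⟩).2⟩ := by
      intro m hm; rw [hψ]; rfl
    have hψ0 : ∀ (hm : (0 : ℤ) ∈ {m : ℤ | -(2 ^ (i+1)) ≤ m ∧ m ≤ 2 ^ (i+1)}),
        ψ ⟨0, hm⟩ = ⟨0, hm⟩ := by
      intro hm
      rw [hψval 0 hm]
      exact Subtype.ext (show -(φ ⟨0, hm⟩).1 = 0 by omega)
    have hψ1 : ∀ (hm : (1 : ℤ) ∈ {m : ℤ | -(2 ^ (i+1)) ≤ m ∧ m ≤ 2 ^ (i+1)}),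
        ψ ⟨1, hm⟩ = ⟨1, hm⟩ := by
      intro hm
      rw [hψval 1 hm]
      exact Subtype.ext (show -(φ ⟨1, hm⟩).1 = 1 by omega)
    have hres := rigid hs ht' hi ψ hψ0 hψ1
    intro n h1 h2
    have := hres n h1 h2
    rw [← this]
    exact sInv_right ht n
  · -- φ 1 = 1
    left
    have h1 : ∀ (hm : (1 : ℤ) ∈ {m : ℤ | -(2 ^ (i+1)) ≤ m ∧ m ≤ 2 ^ (i+1)}),
        φ ⟨1, hm⟩ = ⟨1, hm⟩ := by
      intro hm
      have : φ ⟨1, memp⟩ = ⟨1, memp⟩ := by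
        rw [hveq]; exact Subtype.ext (show vv = 1 by omega)
      exact this
    exact rigid hs ht hi φ (fun hm => h0) h1

lemma no_iso0 (hs : SegPreserving s) (ht : SegPreserving t) (hs1 : s 1 = 1) (ht1 : t 1 = 2)
    (φ : Gsi s 0 ≃g Gsi t 0) : False := by
  have hpow : (2 : ℤ) ^ (0 + 1) = 2 := by norm_num
  have mem2 : (2 : ℤ) ∈ {m : ℤ | -(2 ^ (0+1)) ≤ m ∧ m ≤ 2 ^ (0+1)} := ⟨by omega, by omega⟩
  have m_2 : (-2 : ℤ) ∈ {m : ℤ | -(2 ^ (0+1)) ≤ m ∧ m ≤ 2 ^ (0+1)} := ⟨by omega, by omega⟩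
  have m_1 : (-1 : ℤ) ∈ {m : ℤ | -(2 ^ (0+1)) ≤ m ∧ m ≤ 2 ^ (0+1)} := ⟨by omega, by omega⟩
  have m0 : (0 : ℤ) ∈ {m : ℤ | -(2 ^ (0+1)) ≤ m ∧ m ≤ 2 ^ (0+1)} := ⟨by omega, by omega⟩
  have m1 : (1 : ℤ) ∈ {m : ℤ | -(2 ^ (0+1)) ≤ m ∧ m ≤ 2 ^ (0+1)} := ⟨by omega, by omega⟩
  -- in `Gsi t 0` the only neighbour of 2 is 1
  have hB2 : ∀ (u : ℤ) (hu : u ∈ {m : ℤ | -(2 ^ (0+1)) ≤ m ∧ m ≤ 2 ^ (0+1)}),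
      (Gsi t 0).Adj ⟨2, mem2⟩ ⟨u, hu⟩ → u = 1 := by
    intro u hu h
    have huB := (mem_iff 0 u).1 hu
    rcases (adjiff t 0 mem2 hu).1 h with ((h' | h') | ⟨n, h1, h2, h3, (⟨e1, e2⟩ | ⟨e1, e2⟩)⟩)
    · omega
    · omega
    · exfalso
      have hn1 : n = 1 := by
        have hl : (1 : ℤ) ≤ (n : ℤ) := by exact_mod_cast h1
        have : (n : ℤ) = 1 := by omega
        exact_mod_cast this
      subst hn1
      rw [ht1] at h3
      have : ((2 : ℕ) : ℤ) = 2 := by norm_num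
      omega
    · exfalso
      have : (0 : ℤ) ≤ ((t n : ℕ) : ℤ) := Int.natCast_nonneg _
      omega
  -- in `Gsi s 0` every vertex has two distinct neighbours
  have hch : (Gsi s 0).Adj ⟨2, mem2⟩ ⟨-2, m_2⟩ := by
    refine chord_adj mem2 m_2 1 le_rfl (by norm_num) ?_
    rw [hs1]; norm_num
  have hA : ∀ (v : ℤ) (hv : v ∈ {m : ℤ | -(2 ^ (0+1)) ≤ m ∧ m ≤ 2 ^ (0+1)}),
      ∃ (x y : ℤ) (hx : x ∈ {m : ℤ | -(2 ^ (0+1)) ≤ m ∧ m ≤ 2 ^ (0+1)})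
        (hy : y ∈ {m : ℤ | -(2 ^ (0+1)) ≤ m ∧ m ≤ 2 ^ (0+1)}),
        x ≠ y ∧ (Gsi s 0).Adj ⟨v, hv⟩ ⟨x, hx⟩ ∧ (Gsi s 0).Adj ⟨v, hv⟩ ⟨y, hy⟩ := by
    intro v hv
    have hvB := (mem_iff 0 v).1 hv
    have hv' : v = -2 ∨ v = -1 ∨ v = 0 ∨ v = 1 ∨ v = 2 := by omega
    rcases hv' with rfl | rfl | rfl | rfl | rfl
    · exact ⟨-1, 2, m_1, mem2, by norm_num, path_adj m_2 m_1 (by omega), hch.symm⟩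
    · exact ⟨-2, 0, m_2, m0, by norm_num, path_adj m_1 m_2 (by omega), path_adj m_1 m0 (by omega)⟩
    · exact ⟨-1, 1, m_1, m1, by norm_num, path_adj m0 m_1 (by omega), path_adj m0 m1 (by omega)⟩
    · exact ⟨0, 2, m0, mem2, by norm_num, path_adj m1 m0 (by omega), path_adj m1 mem2 (by omega)⟩
    · exact ⟨1, -2, m1, m_2, by norm_num, path_adj mem2 m1 (by omega), hch⟩
  obtain ⟨vv, hvv, hveq⟩ : ∃ (vv : ℤ) (hm : vv ∈ {m : ℤ | -(2 ^ (0+1)) ≤ m ∧ m ≤ 2 ^ (0+1)}),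
      φ.symm ⟨2, mem2⟩ = ⟨vv, hm⟩ := ⟨(φ.symm ⟨2, mem2⟩).1, (φ.symm ⟨2, mem2⟩).2, rfl⟩
  obtain ⟨x, y, hx, hy, hxy, hax, hay⟩ := hA vv hvv
  have hmapx : (Gsi t 0).Adj ⟨2, mem2⟩ (φ ⟨x, hx⟩) := by
    have := φ.map_adj_iff.2 hax
    rwa [← hveq, RelIso.apply_symm_apply] at this
  have hmapy : (Gsi t 0).Adj ⟨2, mem2⟩ (φ ⟨y, hy⟩) := by
    have := φ.map_adj_iff.2 hay
    rwa [← hveq, RelIso.apply_symm_apply] at this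
  have hx1 : (φ ⟨x, hx⟩).1 = 1 := hB2 _ (φ ⟨x, hx⟩).2 hmapx
  have hy1 : (φ ⟨y, hy⟩).1 = 1 := hB2 _ (φ ⟨y, hy⟩).2 hmapy
  have hfeq : φ ⟨x, hx⟩ = φ ⟨y, hy⟩ := Subtype.ext (by rw [hx1, hy1])
  have := φ.toEquiv.injective hfeq
  rw [Subtype.mk.injEq] at this
  exact hxy this

lemma forward_zero (hs : SegPreserving s) (ht : SegPreserving t)
    (φ : Gsi s 0 ≃g Gsi t 0) : t 1 = s 1 ∨ t (s 1) = 1 := by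
  have hs1 := seg_mem (i := 1) hs le_rfl 1 le_rfl (by norm_num)
  have ht1 := seg_mem (i := 1) ht le_rfl 1 le_rfl (by norm_num)
  have hs1' : s 1 = 1 ∨ s 1 = 2 := by omega
  have ht1' : t 1 = 1 ∨ t 1 = 2 := by omega
  rcases hs1' with h | h <;> rcases ht1' with h' | h'
  · left; rw [h, h']
  · exact ((no_iso0 hs ht h h' φ)).elim
  · exact ((no_iso0 ht hs h' h φ.symm)).elim
  · left; rw [h, h']

/-- identity isomorphism when `t = s` on the segment -/
def idIso (h : ∀ n : ℕ, 1 ≤ n → n ≤ 2 ^ i → t n = s n) : (Gsi s i) ≃g (Gsi t i) where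
  toEquiv := Equiv.refl _
  map_rel_iff' := by
    rintro ⟨a, ha⟩ ⟨b, hb⟩
    show (Gsi t i).Adj ⟨a, ha⟩ ⟨b, hb⟩ ↔ (Gsi s i).Adj ⟨a, ha⟩ ⟨b, hb⟩
    have hN := hNM i
    rw [adjiff t i ha hb, adjiff s i ha hb]
    constructor
    · rintro ((h' | h') | ⟨n, h1, h2, h3, h4⟩)
      · exact Or.inl (Or.inl h')
      · exact Or.inl (Or.inr h')
      · have hn2 : n ≤ 2 ^ i := by
          have : (n : ℤ) ≤ ((2 ^ i : ℕ) : ℤ) := by omega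
          exact_mod_cast this
        have heq := h n h1 hn2
        rw [heq] at h3 h4
        exact Or.inr ⟨n, h1, h2, h3, h4⟩
    · rintro ((h' | h') | ⟨n, h1, h2, h3, h4⟩)
      · exact Or.inl (Or.inl h')
      · exact Or.inl (Or.inr h')
      · have hn2 : n ≤ 2 ^ i := by
          have : (n : ℤ) ≤ ((2 ^ i : ℕ) : ℤ) := by omega
          exact_mod_cast this
        have heq := h n h1 hn2
        rw [← heq] at h3 h4
        exact Or.inr ⟨n, h1, h2, h3, h4⟩

/-- negation isomorphism when `t ∘ s = id` on the segment -/
def negIso' (hs : SegPreserving s) (ht : SegPreserving t)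
    (h : ∀ n : ℕ, 1 ≤ n → n ≤ 2 ^ i → t (s n) = n) : (Gsi s i) ≃g (Gsi t i) where
  toEquiv := negEquiv i
  map_rel_iff' := by
    rintro ⟨a, ha⟩ ⟨b, hb⟩
    show (Gsi t i).Adj ⟨-a, neg_mem ha⟩ ⟨-b, neg_mem hb⟩ ↔ (Gsi s i).Adj ⟨a, ha⟩ ⟨b, hb⟩
    have hN := hNM i
    rw [adjiff t i (neg_mem ha) (neg_mem hb), adjiff s i ha hb]
    constructor
    · rintro ((h' | h') | ⟨m, h1, h2, h3, (⟨e1, e2⟩ | ⟨e1, e2⟩)⟩)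
      · exact Or.inl (Or.inr (by omega))
      · exact Or.inl (Or.inl (by omega))
      · -- -a = 2m, -b = -(2 t m)
        have htm2 : t m ≤ 2 ^ i := by
          have : ((t m : ℕ) : ℤ) ≤ ((2 ^ i : ℕ) : ℤ) := by omega
          exact_mod_cast this
        have htm1 : 1 ≤ t m := s_pos ht m h1
        have hstm : s (t m) = m := by
          have := h (t m) htm1 htm2
          exact ht.1.1 this
        refine Or.inr ⟨t m, htm1, h3, ?_, Or.inr ⟨by omega, ?_⟩⟩
        · rw [hstm]; omega
        · rw [hstm]; omega
      · -- -b = 2m, -a = -(2 t m)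
        have htm2 : t m ≤ 2 ^ i := by
          have : ((t m : ℕ) : ℤ) ≤ ((2 ^ i : ℕ) : ℤ) := by omega
          exact_mod_cast this
        have htm1 : 1 ≤ t m := s_pos ht m h1
        have hstm : s (t m) = m := by
          have := h (t m) htm1 htm2
          exact ht.1.1 this
        refine Or.inr ⟨t m, htm1, h3, ?_, Or.inl ⟨by omega, ?_⟩⟩
        · rw [hstm]; omega
        · rw [hstm]; omega
    · rintro ((h' | h') | ⟨n, h1, h2, h3, (⟨e1, e2⟩ | ⟨e1, e2⟩)⟩)
      · exact Or.inl (Or.inr (by omega))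
      · exact Or.inl (Or.inl (by omega))
      · -- a = 2n, b = -(2 s n)
        have hn2 : n ≤ 2 ^ i := by
          have : (n : ℤ) ≤ ((2 ^ i : ℕ) : ℤ) := by omega
          exact_mod_cast this
        have htsn := h n h1 hn2
        refine Or.inr ⟨s n, s_pos hs n h1, h3, ?_, Or.inr ⟨by omega, ?_⟩⟩
        · rw [htsn]; omega
        · rw [htsn]; omega
      · -- b = 2n, a = -(2 s n)
        have hn2 : n ≤ 2 ^ i := by
          have : (n : ℤ) ≤ ((2 ^ i : ℕ) : ℤ) := by omega
          exact_mod_cast this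
        have htsn := h n h1 hn2
        refine Or.inr ⟨s n, s_pos hs n h1, h3, ?_, Or.inl ⟨by omega, ?_⟩⟩
        · rw [htsn]; omega
        · rw [htsn]; omega

end Aux

/-- `G_s(i)` and `G_t(i)` are isomorphic if and only if the restrictions of `s`
and `t` to `{1,…,2^i}` coincide or are mutually inverse. -/
theorem stmt_13 (s t : ℕ → ℕ) (hs : SegPreserving s) (ht : SegPreserving t) (i : ℕ) :
    Nonempty (Gsi s i ≃g Gsi t i) ↔
      ((∀ n : ℕ, 1 ≤ n → n ≤ 2 ^ i → t n = s n) ∨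
        (∀ n : ℕ, 1 ≤ n → n ≤ 2 ^ i → t (s n) = n)) := by
  constructor
  · rintro ⟨φ⟩
    by_cases hi : 1 ≤ i
    · exact Aux.forward_pos hs ht hi φ
    · have hi0 : i = 0 := by omega
      subst hi0
      rcases Aux.forward_zero hs ht φ with h | h
      · left
        intro n h1 h2
        have hn : n = 1 := le_antisymm (by simpa using h2) h1
        rw [hn]; exact h
      · right
        intro n h1 h2
        have hn : n = 1 := le_antisymm (by simpa using h2) h1
        rw [hn]; exact h
  · rintro (h | h)
    · exact ⟨Aux.idIso h⟩
    · exact ⟨Aux.negIso' hs ht h⟩
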